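/- Let N ≥ 1, γ > 0, λ_α > γ²/4 for α = 1, …, N, f_α = √(4λ_α − γ²), μ_{α±} = −(γ ∓ if_α)/2 ∈ ℂ. Let H₀ be the 2N×2N complex matrix [[0_{N×N}, I_N], [−Λ, −γI_N]] with Λ = diag(λ_α). For s ∈ {+1, −1}, let t^{(0)L}_{αs} be the row vector with entries (i·s/f_α)·μ_{α,−s} in position α and −i·s/f_α in position N+α (zero elsewhere), and t^{(0)R}_{αs} the column vector with entry 1 in position α and μ_{αs} in position N+α (zero elsewhere). Let V₂ be a real symmetric N×N matrix and W = [[0_{N×N}, 0_{N×N}], [0_{N×N}, −δγ·V₂]] for δγ ∈ ℝ. Then t^{(0)L}_{αs}·H₀·t^{(0)R}_{αs'} = μ_{αs}·δ_{ss'} for s, s' ∈ {+1, −1}, and t^{(0)L}_{αs}·W·t^{(0)R}_{αs} = −δγ·(1/2 + i·s·γ/(2f_α))·(V₂)_{αα}. -/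

import Mathlib

open Matrix

/-- Equation (43) of the paper: the left/right eigenvectors `t^{(0)L}_{αs}`,
`t^{(0)R}_{αs}` of the block-diagonal unperturbed state matrix
`H₀ = [[0, I], [−Λ, −γI]]` (supported on the coordinate pair `(α, N+α)`, with
eigenvalues `μ_{αs} = −(γ − i s f_α)/2`, `f_α = √(4λ_α − γ²)`) satisfy
`t^{(0)L}_{αs} H₀ t^{(0)R}_{αs'} = μ_{αs} δ_{ss'}`, and the first-order
eigenvalue shift induced by the damping-inhomogeneity perturbation
`W = [[0, 0], [0, −δγ V₂]]` is
`t^{(0)L}_{αs} W t^{(0)R}_{αs} = −δγ (1/2 + i s γ/(2 f_α)) (V₂)_{αα}`. -/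
theorem stmt_14 (N : ℕ) (hN : 1 ≤ N) (γ : ℝ) (hγ : 0 < γ)
    (lam : Fin N → ℝ) (hlam : ∀ α, γ ^ 2 / 4 < lam α)
    (f : Fin N → ℝ) (hf : ∀ α, f α = Real.sqrt (4 * lam α - γ ^ 2))
    (mu : Fin N → ℝ → ℂ)
    (hmu : ∀ α (s : ℝ), mu α s = -((γ : ℂ) - Complex.I * (s : ℂ) * (f α : ℂ)) / 2)
    (H₀ : Matrix (Fin N ⊕ Fin N) (Fin N ⊕ Fin N) ℂ)
    (hH₀ : H₀ = Matrix.fromBlocks 0 1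
      (-(Matrix.diagonal (fun α => (lam α : ℂ)))) (-(γ : ℂ) • 1))
    (tL tR : Fin N → ℝ → (Fin N ⊕ Fin N) → ℂ)
    (htLl : ∀ α (s : ℝ) (β : Fin N), tL α s (Sum.inl β) =
      if β = α then Complex.I * (s : ℂ) / (f α : ℂ) * mu α (-s) else 0)
    (htLr : ∀ α (s : ℝ) (β : Fin N), tL α s (Sum.inr β) =
      if β = α then -(Complex.I * (s : ℂ) / (f α : ℂ)) else 0)
    (htRl : ∀ α (s : ℝ) (β : Fin N), tR α s (Sum.inl β) =
      if β = α then 1 else 0)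
    (htRr : ∀ α (s : ℝ) (β : Fin N), tR α s (Sum.inr β) =
      if β = α then mu α s else 0)
    (V₂ : Matrix (Fin N) (Fin N) ℝ) (hV₂ : V₂.IsSymm) (δγ : ℝ)
    (W : Matrix (Fin N ⊕ Fin N) (Fin N ⊕ Fin N) ℂ)
    (hW : W = Matrix.fromBlocks 0 0 0 (-(δγ : ℂ) • V₂.map Complex.ofReal)) :
    ∀ (α : Fin N) (s s' : ℝ), (s = 1 ∨ s = -1) → (s' = 1 ∨ s' = -1) →
      (tL α s ⬝ᵥ H₀.mulVec (tR α s') = mu α s * (if s = s' then 1 else 0)) ∧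
      (tL α s ⬝ᵥ W.mulVec (tR α s) =
        -(δγ : ℂ) * (1 / 2 + Complex.I * (s : ℂ) * (γ : ℂ) / (2 * (f α : ℂ)))
          * (V₂ α α : ℂ)) := by
  subst hH₀ hW
  intro α s s' hs hs'
  have hfpos : 0 < f α := by
    rw [hf]; exact Real.sqrt_pos.2 (by nlinarith [hlam α])
  have hfne : (f α : ℂ) ≠ 0 := by exact_mod_cast hfpos.ne'
  have hfsqR : f α ^ 2 = 4 * lam α - γ ^ 2 := by
    rw [hf]; exact Real.sq_sqrt (by nlinarith [hlam α])
  have hfsq : (f α : ℂ) ^ 2 = 4 * (lam α : ℂ) - (γ : ℂ) ^ 2 := by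
    exact_mod_cast congrArg (Complex.ofReal) hfsqR
  have hI : Complex.I ^ 2 = -1 := Complex.I_sq
  constructor
  · simp only [dotProduct, mulVec, Fintype.sum_sum_type, fromBlocks_apply₁₁,
      fromBlocks_apply₁₂, fromBlocks_apply₂₁, fromBlocks_apply₂₂, htLl, htLr,
      htRl, htRr, hmu, Matrix.zero_apply, Matrix.one_apply, Matrix.neg_apply,
      Matrix.diagonal_apply, Matrix.smul_apply, smul_eq_mul, ite_mul, mul_ite,
      mul_zero, zero_mul, neg_zero, Finset.sum_ite_eq, Finset.sum_ite_eq',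
      Finset.mem_univ, if_true, mul_one, neg_mul, neg_neg, Finset.sum_neg_distrib]
    rcases hs with rfl | rfl <;> rcases hs' with rfl | rfl <;>
      norm_num <;> field_simp <;> ring_nf
    · linear_combination (-Complex.I)*hfsq
        + (2*(γ:ℂ)*(f α:ℂ) - Complex.I*(f α:ℂ)^2)*hI
    · linear_combination (-Complex.I)*hfsq + (Complex.I*(f α:ℂ)^2)*hI
    · linear_combination (Complex.I)*hfsq + (-Complex.I*(f α:ℂ)^2)*hI
    · linear_combination (Complex.I)*hfsq
        + (2*(γ:ℂ)*(f α:ℂ) + Complex.I*(f α:ℂ)^2)*hI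
  · simp only [dotProduct, mulVec, Fintype.sum_sum_type, fromBlocks_apply₁₁,
      fromBlocks_apply₁₂, fromBlocks_apply₂₁, fromBlocks_apply₂₂, htLl, htLr,
      htRl, htRr, hmu, Matrix.zero_apply, Matrix.one_apply, Matrix.neg_apply,
      Matrix.map_apply, Matrix.smul_apply, smul_eq_mul, ite_mul, mul_ite,
      mul_zero, zero_mul, neg_zero, Finset.sum_ite_eq, Finset.sum_ite_eq',
      Finset.mem_univ, if_true, mul_one, neg_mul, neg_neg]
    rcases hs with rfl | rfl <;>
      norm_num <;> field_simp <;> ring_nf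
    · linear_combination ((δγ:ℂ)*(V₂ α α:ℂ)*(f α:ℂ))*hI
    · linear_combination ((δγ:ℂ)*(V₂ α α:ℂ)*(f α:ℂ))*hI
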